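/- Let 𝒱 be the v-transform with fulcrum δ ∈ (0,1) and generator Ψ, where Ψ is differentiable on (0,1) with strictly positive derivative, and let Δ be its conditional down probability. Then for every u ∈ (δ,1), 𝒱 is differentiable at u and at the dual point u* = u − 𝒱(u) ∈ (0,δ), and 𝒱′(u) = 𝒱′(u*) / (1 + 𝒱′(u*)); equivalently, 1 − Δ(𝒱(u)) = 1/𝒱′(u). -/

import Mathlib

/-!
STATEMENT 18: the derivative relation between the two branches of a v-transform:
for `u ∈ (δ,1)` with dual point `u* = u - 𝒱(u) ∈ (0,δ)`,
`𝒱′(u) = 𝒱′(u*)/(1 + 𝒱′(u*))`; equivalently `1 - Δ(𝒱(u)) = 1/𝒱′(u)`.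
-/

open Set MeasureTheory

/-- The v-transform with fulcrum `δ` and generator `Ψ` (with inverse `Ψinv`):
`𝒱(u) = (1-u) - (1-δ)·Ψ(u/δ)` for `u ≤ δ` and `𝒱(u) = u - δ·Ψinv((1-u)/(1-δ))`
for `u > δ`. -/
noncomputable def vt (δ : ℝ) (Ψ Ψinv : ℝ → ℝ) (u : ℝ) : ℝ :=
  if u ≤ δ then (1 - u) - (1 - δ) * Ψ (u / δ)
  else u - δ * Ψinv ((1 - u) / (1 - δ))

/-- Left-branch inverse `𝒱⁻¹(v) = inf {u ∈ [0,1] : 𝒱 u = v}`. -/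
noncomputable def vtInv (V : ℝ → ℝ) (v : ℝ) : ℝ :=
  sInf {u | u ∈ Set.Icc (0:ℝ) 1 ∧ V u = v}

/-- Conditional down probability `Δ(v) = -1 / 𝒱′(𝒱⁻¹(v))`. -/
noncomputable def vtDelta (V : ℝ → ℝ) (v : ℝ) : ℝ :=
  -1 / deriv V (vtInv V v)

/-- Stochastic inversion function of a v-transform:
`𝒱⁻¹ₛ(v,w) = 𝒱⁻¹(v)` if `w ≤ Δ(v)`, and `v + 𝒱⁻¹(v)` otherwise. -/
noncomputable def vtSInv (V : ℝ → ℝ) (v w : ℝ) : ℝ :=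
  if w ≤ vtDelta V v then vtInv V v else v + vtInv V v

theorem stmt_18
    (δ : ℝ) (hδ : δ ∈ Set.Ioo (0:ℝ) 1) (Ψ Ψinv : ℝ → ℝ)
    (hΨc : ContinuousOn Ψ (Set.Icc 0 1)) (hΨm : StrictMonoOn Ψ (Set.Icc 0 1))
    (hΨ0 : Ψ 0 = 0) (hΨ1 : Ψ 1 = 1)
    (hΨinv : ∀ x ∈ Set.Icc (0:ℝ) 1, Ψinv (Ψ x) = x ∧ Ψ (Ψinv x) = x)
    (hΨd : ∀ x ∈ Set.Ioo (0:ℝ) 1, DifferentiableAt ℝ Ψ x ∧ 0 < deriv Ψ x)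
    :
    ∀ u ∈ Set.Ioo δ 1,
      u - vt δ Ψ Ψinv u ∈ Set.Ioo 0 δ ∧
      DifferentiableAt ℝ (vt δ Ψ Ψinv) u ∧
      DifferentiableAt ℝ (vt δ Ψ Ψinv) (u - vt δ Ψ Ψinv u) ∧
      deriv (vt δ Ψ Ψinv) u
        = deriv (vt δ Ψ Ψinv) (u - vt δ Ψ Ψinv u)
            / (1 + deriv (vt δ Ψ Ψinv) (u - vt δ Ψ Ψinv u)) ∧
      1 - vtDelta (vt δ Ψ Ψinv) (vt δ Ψ Ψinv u) = 1 / deriv (vt δ Ψ Ψinv) u := by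
  obtain ⟨hδ0, hδ1⟩ := hδ
  have hδ1' : (0:ℝ) < 1 - δ := by linarith
  have hδne : δ ≠ 0 := ne_of_gt hδ0
  have hδ1ne : (1:ℝ) - δ ≠ 0 := ne_of_gt hδ1'
  -- surjectivity of Ψ onto [0,1]
  have hsurj : ∀ v ∈ Icc (0:ℝ) 1, ∃ t ∈ Icc (0:ℝ) 1, Ψ t = v := by
    intro v hv
    have h := intermediate_value_Icc (zero_le_one) hΨc
    rw [hΨ0, hΨ1] at h
    obtain ⟨t, ht, hh⟩ := h hv
    exact ⟨t, ht, hh⟩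
  have hinv_mem : ∀ v ∈ Icc (0:ℝ) 1, Ψinv v ∈ Icc (0:ℝ) 1 := by
    intro v hv
    obtain ⟨t, ht, rfl⟩ := hsurj v hv
    rw [(hΨinv t ht).1]; exact ht
  have hinv_mono : StrictMonoOn Ψinv (Icc (0:ℝ) 1) := by
    intro a ha b hb hab
    obtain ⟨s, hs, rfl⟩ := hsurj a ha
    obtain ⟨t, ht, rfl⟩ := hsurj b hb
    rw [(hΨinv _ hs).1, (hΨinv _ ht).1]
    exact (hΨm.lt_iff_lt hs ht).mp hab
  intro u hu
  obtain ⟨huδ, hu1⟩ := hu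
  have hu0 : 0 < u := lt_trans hδ0 huδ
  set y : ℝ := (1 - u) / (1 - δ) with hy_def
  have hy : y ∈ Ioo (0:ℝ) 1 := by
    constructor
    · exact div_pos (by linarith) hδ1'
    · rw [div_lt_one hδ1']; linarith
  have hyIcc : y ∈ Icc (0:ℝ) 1 := ⟨le_of_lt hy.1, le_of_lt hy.2⟩
  set x : ℝ := Ψinv y with hx_def
  have hΨxy : Ψ x = y := (hΨinv y hyIcc).2
  have hxIcc : x ∈ Icc (0:ℝ) 1 := hinv_mem y hyIcc
  have hxIoo : x ∈ Ioo (0:ℝ) 1 := by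
    constructor
    · rcases lt_or_eq_of_le hxIcc.1 with h | h
      · exact h
      · exfalso; rw [← h, hΨ0] at hΨxy; exact absurd hΨxy.symm (ne_of_gt hy.1)
    · rcases lt_or_eq_of_le hxIcc.2 with h | h
      · exact h
      · exfalso; rw [h, hΨ1] at hΨxy; exact absurd hΨxy.symm (ne_of_lt hy.2)
  obtain ⟨hΨdx, hΨpx⟩ := hΨd x hxIoo
  have hΨpxne : deriv Ψ x ≠ 0 := ne_of_gt hΨpx
  have hVu : vt δ Ψ Ψinv u = u - δ * x := by
    rw [vt, if_neg (not_le.mpr huδ)]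
  have hdual : u - vt δ Ψ Ψinv u = δ * x := by rw [hVu]; ring
  have hdx_mem : δ * x ∈ Ioo 0 δ := by
    constructor
    · exact mul_pos hδ0 hxIoo.1
    · nlinarith [hxIoo.2]
  have hdxδ : δ * x / δ = x := by field_simp
  have hVdx : vt δ Ψ Ψinv (δ * x) = u - δ * x := by
    rw [vt, if_pos (le_of_lt hdx_mem.2), hdxδ, hΨxy, hy_def]
    field_simp; ring
  -- derivative on the left branch at δ*x
  set L : ℝ := -1 - (1 - δ) / δ * deriv Ψ x with hL_def
  have hApos : 0 < (1 - δ) / δ * deriv Ψ x := mul_pos (div_pos hδ1' hδ0) hΨpx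
  have hLpos : L < -1 := by rw [hL_def]; linarith
  have hL : HasDerivAt (vt δ Ψ Ψinv) L (δ * x) := by
    have hcomp : HasDerivAt (fun t => Ψ (t / δ)) (deriv Ψ x * (1 / δ)) (δ * x) := by
      have hid : HasDerivAt (fun t : ℝ => t / δ) (1 / δ) (δ * x) := by
        simpa using (hasDerivAt_id (δ * x)).div_const δ
      have hΨ' : HasDerivAt Ψ (deriv Ψ x) (δ * x / δ) := by
        rw [hdxδ]; exact hΨdx.hasDerivAt
      exact HasDerivAt.comp _ hΨ' hid
    have h1 : HasDerivAt (fun t => (1 - t) - (1 - δ) * Ψ (t / δ)) L (δ * x) := by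
      have := ((hasDerivAt_const (δ * x) (1:ℝ)).sub (hasDerivAt_id (δ * x))).sub
        (hcomp.const_mul (1 - δ))
      refine this.congr_deriv ?_
      rw [hL_def]; ring
    apply h1.congr_of_eventuallyEq
    filter_upwards [Iio_mem_nhds hdx_mem.2] with t ht
    rw [vt, if_pos (le_of_lt ht)]
  -- continuity of Ψinv at y
  have h0Icc : (0:ℝ) ∈ Icc (0:ℝ) 1 := ⟨le_refl 0, zero_le_one⟩
  have h1Icc : (1:ℝ) ∈ Icc (0:ℝ) 1 := ⟨zero_le_one, le_refl 1⟩
  have hinv_cont : ContinuousAt Ψinv y := by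
    apply hinv_mono.continuousAt_of_image_mem_nhds (Icc_mem_nhds hy.1 hy.2)
    apply Filter.mem_of_superset (Ioo_mem_nhds hxIoo.1 hxIoo.2)
    intro t ht
    have htIcc : t ∈ Icc (0:ℝ) 1 := ⟨le_of_lt ht.1, le_of_lt ht.2⟩
    refine ⟨Ψ t, ⟨?_, ?_⟩, (hΨinv t htIcc).1⟩
    · rw [← hΨ0]; exact le_of_lt (hΨm h0Icc htIcc ht.1)
    · rw [← hΨ1]; exact le_of_lt (hΨm htIcc h1Icc ht.2)
  -- derivative of Ψinv at y
  have hΨat : HasDerivAt Ψ (deriv Ψ x) (Ψinv y) := by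
    rw [← hx_def]; exact hΨdx.hasDerivAt
  have hev : ∀ᶠ v in nhds y, Ψ (Ψinv v) = v := by
    filter_upwards [Ioo_mem_nhds hy.1 hy.2] with v hv
    exact (hΨinv v ⟨le_of_lt hv.1, le_of_lt hv.2⟩).2
  have hinv_deriv : HasDerivAt Ψinv (deriv Ψ x)⁻¹ y :=
    HasDerivAt.of_local_left_inverse hinv_cont hΨat hΨpxne hev
  -- derivative on the right branch at u
  set R : ℝ := 1 + δ / ((1 - δ) * deriv Ψ x) with hR_def
  have hR : HasDerivAt (vt δ Ψ Ψinv) R u := by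
    have hinner : HasDerivAt (fun t : ℝ => (1 - t) / (1 - δ)) (-1 / (1 - δ)) u := by
      have := ((hasDerivAt_const u (1:ℝ)).sub (hasDerivAt_id u)).div_const (1 - δ)
      simpa using this
    have hcomp : HasDerivAt (fun t : ℝ => Ψinv ((1 - t) / (1 - δ)))
        ((deriv Ψ x)⁻¹ * (-1 / (1 - δ))) u := by
      have h' : HasDerivAt Ψinv (deriv Ψ x)⁻¹ ((1 - u) / (1 - δ)) := by
        rw [← hy_def]; exact hinv_deriv
      exact HasDerivAt.comp _ h' hinner
    have h1 : HasDerivAt (fun t : ℝ => t - δ * Ψinv ((1 - t) / (1 - δ))) R u := by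
      have := (hasDerivAt_id u).sub (hcomp.const_mul δ)
      refine this.congr_deriv ?_
      rw [hR_def]; field_simp; ring
    apply h1.congr_of_eventuallyEq
    filter_upwards [Ioi_mem_nhds huδ] with t ht
    rw [vt, if_neg (not_le.mpr ht)]
  have hderivu : deriv (vt δ Ψ Ψinv) u = R := hR.deriv
  have hderivdx : deriv (vt δ Ψ Ψinv) (δ * x) = L := hL.deriv
  have hLne : L ≠ 0 := by linarith
  have h1Lne : 1 + L ≠ 0 := by
    rw [hL_def]; intro h; nlinarith
  have hRL : R = L / (1 + L) := by
    rw [eq_div_iff h1Lne, hR_def, hL_def]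
    field_simp
    ring
  -- vtInv at the value vt u
  have hInv : vtInv (vt δ Ψ Ψinv) (vt δ Ψ Ψinv u) = δ * x := by
    rw [vtInv]
    have hmem : δ * x ∈ {t | t ∈ Icc (0:ℝ) 1 ∧ vt δ Ψ Ψinv t = vt δ Ψ Ψinv u} := by
      refine ⟨⟨le_of_lt hdx_mem.1, ?_⟩, by rw [hVdx, hVu]⟩
      linarith [hdx_mem.2]
    apply le_antisymm
    · exact csInf_le ⟨0, fun t ht => ht.1.1⟩ hmem
    · apply le_csInf ⟨δ * x, hmem⟩
      intro t ht
      obtain ⟨⟨ht0, ht1⟩, htv⟩ := ht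
      by_contra hcon
      push_neg at hcon
      have htδ : t ≤ δ := le_of_lt (lt_trans hcon hdx_mem.2)
      -- vt is strictly decreasing on [0,δ]: vt t > vt (δ*x)
      have hΨlt : Ψ (t / δ) < Ψ x := by
        apply hΨm ⟨div_nonneg ht0 (le_of_lt hδ0), by
          rw [div_le_one hδ0]; exact htδ⟩ hxIcc
        rw [div_lt_iff₀ hδ0]
        linarith [hcon]
      have hvt_t : vt δ Ψ Ψinv t = (1 - t) - (1 - δ) * Ψ (t / δ) := by
        rw [vt, if_pos htδ]
      have : vt δ Ψ Ψinv (δ * x) < vt δ Ψ Ψinv t := by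
        rw [hvt_t, hVdx]
        have hΨval : (1 - δ * x) - (1 - δ) * Ψ x = u - δ * x := by
          rw [hΨxy, hy_def]; field_simp; ring
        nlinarith [hΨlt]
      rw [hVdx, htv, hVu] at this
      linarith
  refine ⟨by rw [hdual]; exact hdx_mem, hR.differentiableAt, ?_, ?_, ?_⟩
  · rw [hdual]; exact hL.differentiableAt
  · rw [hdual, hderivu, hderivdx]; exact hRL
  · rw [vtDelta, hInv, hderivdx, hderivu, hRL]
    field_simp
    ring
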